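/- arXiv:2105.05026 — 6 statements merged into one kernel-verified Lean document; each statement's English description precedes it below -/
import Mathlib

section
/- Let c ≥ 2 and let ℓ: ℝ → ℝ be ρ-Lipschitz with 0 ≤ ℓ(z) ≤ B for all z ∈ ℝ. Then for every nontrivial y ∈ {−1,+1}^c and all u, v ∈ ℝ^c: |L_{u2}(u,y) − L_{u2}(v,y)| ≤ (ρ√c/(c−1))·‖u−v‖₂, and L_{u2}(v,y) ≤ (1 + 1/(c−1))·B. -/
open scoped Classical BigOperators

/-- The set of positive-label indices of `y ∈ {-1,+1}^c`. -/
noncomputable def Sp {c : ℕ} (y : Fin c → ℝ) : Finset (Fin c) :=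
  Finset.univ.filter (fun j => y j = 1)

/-- The set of negative-label indices of `y ∈ {-1,+1}^c`. -/
noncomputable def Sm {c : ℕ} (y : Fin c → ℝ) : Finset (Fin c) :=
  Finset.univ.filter (fun j => y j = -1)

/-- The univariate surrogate loss `L_{u2}`. -/
noncomputable def Lu2 {c : ℕ} (ℓ : ℝ → ℝ) (v y : Fin c → ℝ) : ℝ :=
  (1 / (((Sp y).card : ℝ) * ((Sm y).card : ℝ))) * ∑ j, ℓ (y j * v j)

theorem stmt0 (c : ℕ) (hc : 2 ≤ c) (ℓ : ℝ → ℝ) (ρ B : ℝ)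
    (hLip : ∀ a b : ℝ, |ℓ a - ℓ b| ≤ ρ * |a - b|)
    (hℓ : ∀ z : ℝ, 0 ≤ ℓ z ∧ ℓ z ≤ B)
    (y : Fin c → ℝ) (hy : ∀ j, y j = 1 ∨ y j = -1)
    (hyp : (Sp y).Nonempty) (hym : (Sm y).Nonempty)
    (u v : Fin c → ℝ) :
    |Lu2 ℓ u y - Lu2 ℓ v y| ≤
        ρ * Real.sqrt c / ((c : ℝ) - 1) * Real.sqrt (∑ j, (u j - v j) ^ 2) ∧
      Lu2 ℓ v y ≤ (1 + 1 / ((c : ℝ) - 1)) * B := by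
  have hρ : 0 ≤ ρ := by
    have := (abs_nonneg (ℓ 0 - ℓ 1)).trans (hLip 0 1)
    simpa using this
  have hB : 0 ≤ B := (hℓ 0).1.trans (hℓ 0).2
  have hyu : Sp y ∪ Sm y = Finset.univ := by
    ext j
    simp only [Sp, Sm, Finset.mem_union, Finset.mem_filter, Finset.mem_univ, true_and]
    simpa using hy j
  have hdisj : Disjoint (Sp y) (Sm y) := by
    rw [Finset.disjoint_left]
    intro j hj hj'
    simp only [Sp, Sm, Finset.mem_filter] at hj hj'
    rw [hj.2] at hj'
    norm_num at hj'
  have hcard : (Sp y).card + (Sm y).card = c := by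
    rw [← Finset.card_union_of_disjoint hdisj, hyu, Finset.card_univ, Fintype.card_fin]
  set p := (Sp y).card with hpdef
  set q := (Sm y).card with hqdef
  have hp : (1 : ℝ) ≤ p := by exact_mod_cast Finset.card_pos.mpr hyp
  have hq : (1 : ℝ) ≤ q := by exact_mod_cast Finset.card_pos.mpr hym
  have hcR : (p : ℝ) + q = c := by exact_mod_cast hcard
  have hc1 : (0 : ℝ) < (c : ℝ) - 1 := by
    have : (2 : ℝ) ≤ c := by exact_mod_cast hc
    linarith
  have hpq : (c : ℝ) - 1 ≤ (p : ℝ) * q := by nlinarith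
  have hpqpos : (0 : ℝ) < (p : ℝ) * q := by nlinarith
  constructor
  · -- Lipschitz part
    have hCS : ∑ j, |u j - v j| ≤ Real.sqrt c * Real.sqrt (∑ j, (u j - v j) ^ 2) := by
      have h1 : (∑ j, |u j - v j|) ^ 2 ≤ (c : ℝ) * ∑ j, (u j - v j) ^ 2 := by
        have := sq_sum_le_card_mul_sum_sq (s := (Finset.univ : Finset (Fin c)))
          (f := fun j => |u j - v j|)
        simpa [sq_abs, Finset.card_univ] using this
      have h2 : ∑ j, |u j - v j| ≤ Real.sqrt ((c : ℝ) * ∑ j, (u j - v j) ^ 2) := by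
        have hn : 0 ≤ ∑ j, |u j - v j| := Finset.sum_nonneg fun j _ => abs_nonneg _
        exact (Real.le_sqrt hn (by positivity)).mpr h1
      rw [← Real.sqrt_mul (by positivity)]
      exact h2
    have hsum : |∑ j, ℓ (y j * u j) - ∑ j, ℓ (y j * v j)| ≤
        ρ * ∑ j, |u j - v j| := by
      rw [← Finset.sum_sub_distrib, Finset.mul_sum]
      refine (Finset.abs_sum_le_sum_abs _ _).trans (Finset.sum_le_sum fun j _ => ?_)
      have := hLip (y j * u j) (y j * v j)
      have hyj : |y j| = 1 := by rcases hy j with h | h <;> simp [h]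
      calc |ℓ (y j * u j) - ℓ (y j * v j)| ≤ ρ * |y j * u j - y j * v j| := this
        _ = ρ * |u j - v j| := by rw [← mul_sub, abs_mul, hyj, one_mul]
    have key : |Lu2 ℓ u y - Lu2 ℓ v y| =
        (1 / ((p : ℝ) * q)) * |∑ j, ℓ (y j * u j) - ∑ j, ℓ (y j * v j)| := by
      rw [Lu2, Lu2, ← mul_sub, abs_mul, abs_of_pos (by positivity)]
    rw [key]
    have hstep : (1 / ((p : ℝ) * q)) * |∑ j, ℓ (y j * u j) - ∑ j, ℓ (y j * v j)| ≤
        (1 / ((c : ℝ) - 1)) * (ρ * (Real.sqrt c * Real.sqrt (∑ j, (u j - v j) ^ 2))) := by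
      refine mul_le_mul ?_ (hsum.trans (by nlinarith [abs_nonneg (∑ j, ℓ (y j * u j) - ∑ j, ℓ (y j * v j))])) (abs_nonneg _) (by positivity)
      exact one_div_le_one_div_of_le hc1 hpq
    refine hstep.trans_eq ?_
    ring
  · -- boundedness part
    have hsum : ∑ j, ℓ (y j * v j) ≤ (c : ℝ) * B := by
      calc ∑ j, ℓ (y j * v j) ≤ ∑ _j : Fin c, B :=
            Finset.sum_le_sum fun j _ => (hℓ _).2
        _ = (c : ℝ) * B := by simp [mul_comm]
    have hsumnn : 0 ≤ ∑ j, ℓ (y j * v j) := Finset.sum_nonneg fun j _ => (hℓ _).1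
    have : Lu2 ℓ v y ≤ (1 / ((c : ℝ) - 1)) * ((c : ℝ) * B) := by
      rw [Lu2]
      refine mul_le_mul (one_div_le_one_div_of_le hc1 hpq) hsum hsumnn (by positivity)
    refine this.trans_eq ?_
    field_simp
    ring
end

section
/- Let ℓ: ℝ → ℝ satisfy 1[z ≤ 0] ≤ ℓ(z) for all z ∈ ℝ. Then for every c ≥ 2, every nontrivial y ∈ {−1,+1}^c and every v ∈ ℝ^c: L_r(v,y) ≤ L_{u4}(v,y) ≤ c·L_{u2}(v,y). -/
open scoped Classical BigOperators

/-- The ranking loss `L_r`. -/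
noncomputable def Lr {c : ℕ} (v y : Fin c → ℝ) : ℝ :=
  (1 / (((Sp y).card : ℝ) * ((Sm y).card : ℝ))) *
    ∑ p ∈ Sp y, ∑ q ∈ Sm y, (if v p ≤ v q then (1 : ℝ) else 0)

/-- The reweighted univariate surrogate loss `L_{u4}`. -/
noncomputable def Lu4 {c : ℕ} (ℓ : ℝ → ℝ) (v y : Fin c → ℝ) : ℝ :=
  (1 / ((min (Sp y).card (Sm y).card : ℕ) : ℝ)) * ∑ j, ℓ (y j * v j)

theorem stmt3 (ℓ : ℝ → ℝ)
    (hind : ∀ z : ℝ, (if z ≤ 0 then (1 : ℝ) else 0) ≤ ℓ z)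
    (c : ℕ) (hc : 2 ≤ c)
    (y : Fin c → ℝ) (hy : ∀ j, y j = 1 ∨ y j = -1)
    (hyp : (Sp y).Nonempty) (hym : (Sm y).Nonempty)
    (v : Fin c → ℝ) :
    Lr v y ≤ Lu4 ℓ v y ∧ Lu4 ℓ v y ≤ (c : ℝ) * Lu2 ℓ v y := by
  classical
  set a := (Sp y).card with ha
  set b := (Sm y).card with hb
  have hapos : 0 < a := Finset.card_pos.mpr hyp
  have hbpos : 0 < b := Finset.card_pos.mpr hym
  have hl0 : ∀ z, (0:ℝ) ≤ ℓ z := fun z =>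
    le_trans (by by_cases h : z ≤ 0 <;> simp [h]) (hind z)
  have hdisj : Disjoint (Sp y) (Sm y) := by
    rw [Finset.disjoint_left]
    intro j hj1 hj2
    simp only [Sp, Sm, Finset.mem_filter] at hj1 hj2
    rw [hj1.2] at hj2; norm_num at hj2
  have hunion : Sp y ∪ Sm y = Finset.univ := by
    ext j
    simp only [Sp, Sm, Finset.mem_union, Finset.mem_filter, Finset.mem_univ, true_and,
      iff_true]
    exact hy j
  have hsum : ∀ f : Fin c → ℝ, ∑ j, f j = ∑ j ∈ Sp y, f j + ∑ j ∈ Sm y, f j := by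
    intro f
    rw [← Finset.sum_union hdisj, hunion]
  have habc : a + b = c := by
    have := Finset.card_union_of_disjoint hdisj
    rw [hunion, Finset.card_univ, Fintype.card_fin] at this
    omega
  have hSp : ∀ p ∈ Sp y, y p = 1 := fun p hp => (Finset.mem_filter.mp hp).2
  have hSm : ∀ q ∈ Sm y, y q = -1 := fun q hq => (Finset.mem_filter.mp hq).2
  set m := min a b with hm
  have hmpos : 0 < m := lt_min hapos hbpos
  have hmR : (0:ℝ) < (m:ℕ) := by exact_mod_cast hmpos
  have haR : (0:ℝ) < (a:ℕ) := by exact_mod_cast hapos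
  have hbR : (0:ℝ) < (b:ℕ) := by exact_mod_cast hbpos
  -- sums
  set SP := ∑ p ∈ Sp y, ℓ (v p) with hSP
  set SM := ∑ q ∈ Sm y, ℓ (-(v q)) with hSM
  have hSPnn : 0 ≤ SP := Finset.sum_nonneg fun p _ => hl0 _
  have hSMnn : 0 ≤ SM := Finset.sum_nonneg fun q _ => hl0 _
  have htotal : ∑ j, ℓ (y j * v j) = SP + SM := by
    rw [hsum (fun j => ℓ (y j * v j))]
    congr 1
    · exact Finset.sum_congr rfl fun p hp => by rw [hSp p hp, one_mul]
    · exact Finset.sum_congr rfl fun q hq => by rw [hSm q hq, neg_one_mul]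
  constructor
  · -- Lr ≤ Lu4
    have hkey : ∑ p ∈ Sp y, ∑ q ∈ Sm y, (if v p ≤ v q then (1:ℝ) else 0)
        ≤ (b:ℝ) * SP + (a:ℝ) * SM := by
      have hle : ∀ p ∈ Sp y, ∀ q ∈ Sm y,
          (if v p ≤ v q then (1:ℝ) else 0) ≤ ℓ (v p) + ℓ (-(v q)) := by
        intro p _ q _
        by_cases h : v p ≤ v q
        · rcases le_or_gt (v p) 0 with h1 | h1
          · have := hind (v p); rw [if_pos h1] at this
            have h2 := hl0 (-(v q))
            simp only [if_pos h]; linarith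
          · have h3 : -(v q) ≤ 0 := by linarith
            have := hind (-(v q)); rw [if_pos h3] at this
            have h2 := hl0 (v p)
            simp only [if_pos h]; linarith
        · simp only [if_neg h]
          exact add_nonneg (hl0 _) (hl0 _)
      calc ∑ p ∈ Sp y, ∑ q ∈ Sm y, (if v p ≤ v q then (1:ℝ) else 0)
          ≤ ∑ p ∈ Sp y, ∑ q ∈ Sm y, (ℓ (v p) + ℓ (-(v q))) := by
            apply Finset.sum_le_sum
            intro p hp
            exact Finset.sum_le_sum fun q hq => hle p hp q hq
        _ = (b:ℝ) * SP + (a:ℝ) * SM := by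
            simp only [Finset.sum_add_distrib, Finset.sum_const, nsmul_eq_mul]
            rw [← Finset.mul_sum, hSP, hSM, ha, hb]
    have step1 : Lr v y ≤ (1/((a:ℝ)*(b:ℝ))) * ((b:ℝ) * SP + (a:ℝ) * SM) := by
      unfold Lr
      rw [← ha, ← hb]
      apply mul_le_mul_of_nonneg_left hkey
      positivity
    have step2 : (1/((a:ℝ)*(b:ℝ))) * ((b:ℝ) * SP + (a:ℝ) * SM)
        = SP / (a:ℝ) + SM / (b:ℝ) := by
      field_simp
    have hma : (m:ℝ) ≤ (a:ℝ) := by exact_mod_cast min_le_left a b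
    have hmb : (m:ℝ) ≤ (b:ℝ) := by exact_mod_cast min_le_right a b
    have step3 : SP / (a:ℝ) + SM / (b:ℝ) ≤ (SP + SM) / (m:ℝ) := by
      rw [add_div]
      gcongr
    have hLu4 : Lu4 ℓ v y = (SP + SM) / (m:ℝ) := by
      unfold Lu4
      rw [htotal, ← ha, ← hb, ← hm, one_div, inv_mul_eq_div]
    rw [hLu4]
    calc Lr v y ≤ _ := step1
      _ = _ := step2
      _ ≤ _ := step3
  · -- Lu4 ≤ c * Lu2
    have habm : (a:ℝ) * (b:ℝ) ≤ (c:ℝ) * (m:ℝ) := by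
      have h2 : a * b ≤ c * m := by
        rcases le_total a b with h | h
        · rw [hm, min_eq_left h]; nlinarith [habc]
        · rw [hm, min_eq_right h]; nlinarith [habc]
      exact_mod_cast h2
    have hS : 0 ≤ ∑ j, ℓ (y j * v j) := by rw [htotal]; linarith
    have h1 : (1:ℝ)/(m:ℝ) ≤ (c:ℝ)/((a:ℝ)*(b:ℝ)) := by
      rw [div_le_div_iff₀ hmR (by positivity)]
      nlinarith [habm]
    unfold Lu4 Lu2
    rw [← ha, ← hb, ← hm]
    have heq : (c:ℝ) * (1/((a:ℝ)*(b:ℝ)) * ∑ j, ℓ (y j * v j))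
        = ((c:ℝ)/((a:ℝ)*(b:ℝ))) * ∑ j, ℓ (y j * v j) := by ring
    rw [heq]
    exact mul_le_mul_of_nonneg_right h1 hS
end

section
/- Let ℓ: ℝ → ℝ satisfy 1[z ≤ 0] ≤ ℓ(z) for all z ∈ ℝ. Then for every c ≥ 2, every nontrivial y ∈ {−1,+1}^c and every v ∈ ℝ^c: L_r(v,y) ≤ L_{u3}(v,y). -/
open scoped Classical BigOperators

/-- The reweighted univariate surrogate loss `L_{u3}`. -/
noncomputable def Lu3 {c : ℕ} (ℓ : ℝ → ℝ) (v y : Fin c → ℝ) : ℝ :=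
  (1 / ((Sp y).card : ℝ)) * ∑ p ∈ Sp y, ℓ (v p) +
    (1 / ((Sm y).card : ℝ)) * ∑ q ∈ Sm y, ℓ (-(v q))

theorem stmt4 (ℓ : ℝ → ℝ)
    (hind : ∀ z : ℝ, (if z ≤ 0 then (1 : ℝ) else 0) ≤ ℓ z)
    (c : ℕ) (hc : 2 ≤ c)
    (y : Fin c → ℝ) (hy : ∀ j, y j = 1 ∨ y j = -1)
    (hyp : (Sp y).Nonempty) (hym : (Sm y).Nonempty)
    (v : Fin c → ℝ) :
    Lr v y ≤ Lu3 ℓ v y := by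
  have hP : (0:ℝ) < ((Sp y).card : ℝ) := by
    exact_mod_cast Finset.card_pos.mpr hyp
  have hM : (0:ℝ) < ((Sm y).card : ℝ) := by
    exact_mod_cast Finset.card_pos.mpr hym
  have key : ∀ p ∈ Sp y, ∀ q ∈ Sm y,
      (if v p ≤ v q then (1:ℝ) else 0) ≤ ℓ (v p) + ℓ (-(v q)) := by
    intro p _ q _
    have h1 := hind (v p)
    have h2 := hind (-(v q))
    by_cases h : v p ≤ v q
    · simp only [h, if_true]
      by_cases hp : v p ≤ 0
      · calc (1:ℝ) ≤ ℓ (v p) := by simpa [hp] using h1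
          _ ≤ ℓ (v p) + ℓ (-(v q)) := by
            have : (0:ℝ) ≤ ℓ (-(v q)) := le_trans (by positivity) h2
            linarith
      · have hq : -(v q) ≤ 0 := by push_neg at hp; linarith
        calc (1:ℝ) ≤ ℓ (-(v q)) := by simpa [hq] using h2
          _ ≤ ℓ (v p) + ℓ (-(v q)) := by
            have : (0:ℝ) ≤ ℓ (v p) := le_trans (by positivity) h1
            linarith
    · simp only [h, if_false]
      have h3 : (0:ℝ) ≤ ℓ (v p) := le_trans (by positivity) h1
      have h4 : (0:ℝ) ≤ ℓ (-(v q)) := le_trans (by positivity) h2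
      linarith
  have hsum : ∑ p ∈ Sp y, ∑ q ∈ Sm y, (if v p ≤ v q then (1:ℝ) else 0)
      ≤ ((Sm y).card : ℝ) * ∑ p ∈ Sp y, ℓ (v p)
        + ((Sp y).card : ℝ) * ∑ q ∈ Sm y, ℓ (-(v q)) := by
    calc ∑ p ∈ Sp y, ∑ q ∈ Sm y, (if v p ≤ v q then (1:ℝ) else 0)
        ≤ ∑ p ∈ Sp y, ∑ q ∈ Sm y, (ℓ (v p) + ℓ (-(v q))) := by
          apply Finset.sum_le_sum
          intro p hp
          exact Finset.sum_le_sum (fun q hq => key p hp q hq)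
      _ = ((Sm y).card : ℝ) * ∑ p ∈ Sp y, ℓ (v p)
          + ((Sp y).card : ℝ) * ∑ q ∈ Sm y, ℓ (-(v q)) := by
          simp [Finset.sum_add_distrib, Finset.mul_sum, Finset.sum_comm,
            Finset.sum_const, nsmul_eq_mul]
  unfold Lr Lu3
  rw [div_mul_eq_mul_div, one_mul, div_le_iff₀ (by positivity)]
  calc ∑ p ∈ Sp y, ∑ q ∈ Sm y, (if v p ≤ v q then (1:ℝ) else 0)
      ≤ ((Sm y).card : ℝ) * ∑ p ∈ Sp y, ℓ (v p)
        + ((Sp y).card : ℝ) * ∑ q ∈ Sm y, ℓ (-(v q)) := hsum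
    _ = (1 / ((Sp y).card : ℝ) * ∑ p ∈ Sp y, ℓ (v p)
        + 1 / ((Sm y).card : ℝ) * ∑ q ∈ Sm y, ℓ (-(v q)))
        * (((Sp y).card : ℝ) * ((Sm y).card : ℝ)) := by
      field_simp
end

section
/- Let c ≥ 1, let β⁺, β⁻: {−1,+1}^c → (0,∞) be positive penalty functions, and let P be a probability distribution on {−1,+1}^c such that φ_j^+(P) > 0 and φ_j^-(P) > 0 for every j ∈ {1,…,c}. Then the conditional surrogate risk f ↦ Σ_{y∈{−1,+1}^c} P(y)·L_u(f,y), with base loss ℓ(z) = e^{−z}, has a unique global minimizer f* over ℝ^c, given coordinatewise by f*_j = (1/2)·ln(φ_j^+(P)/φ_j^-(P)). -/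
open scoped BigOperators

/-- The sign value of a Boolean label: `true ↦ +1`, `false ↦ -1`. -/
def toSign (b : Bool) : ℝ := if b then 1 else -1

/-- The general reweighted univariate surrogate loss `L_u`. -/
noncomputable def Lu {c : ℕ} (βp βm : (Fin c → Bool) → ℝ) (ℓ : ℝ → ℝ)
    (v : Fin c → ℝ) (y : Fin c → Bool) : ℝ :=
  ∑ j, (if y j then βp y else βm y) * ℓ (toSign (y j) * v j)

/-- The conditional surrogate risk. -/
noncomputable def risk {c : ℕ} (βp βm : (Fin c → Bool) → ℝ) (ℓ : ℝ → ℝ)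
    (P : (Fin c → Bool) → ℝ) (f : Fin c → ℝ) : ℝ :=
  ∑ y, P y * Lu βp βm ℓ f y

/-- `φ_j^+(P)`. -/
def phiP {c : ℕ} (β P : (Fin c → Bool) → ℝ) (j : Fin c) : ℝ :=
  ∑ y ∈ Finset.univ.filter (fun y : Fin c → Bool => y j = true), β y * P y

/-- `φ_j^-(P)`. -/
def phiM {c : ℕ} (β P : (Fin c → Bool) → ℝ) (j : Fin c) : ℝ :=
  ∑ y ∈ Finset.univ.filter (fun y : Fin c → Bool => y j = false), β y * P y

lemma risk_eq {c : ℕ} (βp βm P : (Fin c → Bool) → ℝ) (f : Fin c → ℝ) :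
    risk βp βm (fun z => Real.exp (-z)) P f
      = ∑ j, (phiP βp P j * Real.exp (-(f j)) + phiM βm P j * Real.exp (f j)) := by
  unfold risk Lu phiP phiM
  simp only [Finset.mul_sum]
  rw [Finset.sum_comm]
  refine Finset.sum_congr rfl fun j _ => ?_
  rw [Finset.sum_mul, Finset.sum_mul,
    ← Finset.sum_filter_add_sum_filter_not Finset.univ (fun y : Fin c → Bool => y j = true)]
  congr 1
  · refine Finset.sum_congr rfl fun y hy => ?_
    have hyj : y j = true := (Finset.mem_filter.mp hy).2
    simp [toSign, hyj]
    ring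
  · refine Finset.sum_congr (by simp [Bool.not_eq_true]) fun y hy => ?_
    have hyj : y j = false := by
      simpa [Bool.not_eq_true] using (Finset.mem_filter.mp hy).2
    simp [toSign, hyj]
    ring

lemma cosh_ge_two (u : ℝ) : 2 ≤ Real.exp u + Real.exp (-u) := by
  have h1 : Real.exp (u/2) * Real.exp (u/2) = Real.exp u := by
    rw [← Real.exp_add]; ring_nf
  have h2 : Real.exp (-(u/2)) * Real.exp (-(u/2)) = Real.exp (-u) := by
    rw [← Real.exp_add]; ring_nf
  have h3 : Real.exp (u/2) * Real.exp (-(u/2)) = 1 := by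
    rw [← Real.exp_add]; simp
  nlinarith [sq_nonneg (Real.exp (u/2) - Real.exp (-(u/2)))]

lemma cosh_eq_two (u : ℝ) (h : Real.exp u + Real.exp (-u) = 2) : u = 0 := by
  by_contra hu
  have hne : Real.exp (u/2) ≠ Real.exp (-(u/2)) := by
    intro he
    exact hu (by have := Real.exp_injective he; linarith)
  have h1 : Real.exp (u/2) * Real.exp (u/2) = Real.exp u := by
    rw [← Real.exp_add]; ring_nf
  have h2 : Real.exp (-(u/2)) * Real.exp (-(u/2)) = Real.exp (-u) := by
    rw [← Real.exp_add]; ring_nf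
  have h3 : Real.exp (u/2) * Real.exp (-(u/2)) = 1 := by
    rw [← Real.exp_add]; simp
  have hpos : 0 < (Real.exp (u/2) - Real.exp (-(u/2)))^2 := by
    have := sub_ne_zero.mpr hne
    positivity
  nlinarith

lemma pt (a b s t : ℝ) (ha : 0 < a) (hb : 0 < b)
    (hs : s = (1/2) * Real.log (a / b)) :
    a * Real.exp (-s) + b * Real.exp s ≤ a * Real.exp (-t) + b * Real.exp t ∧
      (a * Real.exp (-s) + b * Real.exp s = a * Real.exp (-t) + b * Real.exp t → t = s) := by
  have h2s : Real.exp (2 * s) = a / b := by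
    rw [hs]
    rw [show 2 * ((1/2) * Real.log (a/b)) = Real.log (a/b) by ring]
    exact Real.exp_log (div_pos ha hb)
  have hab : a * Real.exp (-s) = b * Real.exp s := by
    have ha' : a = b * Real.exp (2 * s) := by
      rw [h2s]; field_simp
    rw [ha', mul_assoc, ← Real.exp_add]
    ring_nf
  have e1 : Real.exp (-t) = Real.exp (-s) * Real.exp (s - t) := by
    rw [← Real.exp_add]; ring_nf
  have e2 : Real.exp t = Real.exp s * Real.exp (t - s) := by
    rw [← Real.exp_add]; ring_nf
  have key : a * Real.exp (-t) + b * Real.exp t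
      = (b * Real.exp s) * (Real.exp (s - t) + Real.exp (t - s)) := by
    rw [e1, e2, ← mul_assoc, ← mul_assoc, hab]; ring
  have hvs : a * Real.exp (-s) + b * Real.exp s = (b * Real.exp s) * 2 := by
    rw [hab]; ring
  have hm : 0 < b * Real.exp s := by positivity
  have hc2 : (2:ℝ) ≤ Real.exp (s - t) + Real.exp (t - s) := by
    simpa using cosh_ge_two (s - t)
  constructor
  · rw [key, hvs]
    exact mul_le_mul_of_nonneg_left hc2 hm.le
  · intro heq
    rw [key, hvs] at heq
    have h2 : Real.exp (s - t) + Real.exp (t - s) = 2 :=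
      (mul_left_cancel₀ hm.ne' heq).symm
    have := cosh_eq_two (s - t) (by simpa using h2)
    linarith

theorem stmt9 (c : ℕ) (hc : 1 ≤ c)
    (βp βm : (Fin c → Bool) → ℝ) (hβp : ∀ y, 0 < βp y) (hβm : ∀ y, 0 < βm y)
    (P : (Fin c → Bool) → ℝ) (hP : ∀ y, 0 ≤ P y) (hP1 : (∑ y, P y) = 1)
    (hφp : ∀ j, 0 < phiP βp P j) (hφm : ∀ j, 0 < phiM βm P j)
    (fstar : Fin c → ℝ)
    (hfstar : ∀ j, fstar j = (1 / 2) * Real.log (phiP βp P j / phiM βm P j)) :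
    (∀ f : Fin c → ℝ,
        risk βp βm (fun z => Real.exp (-z)) P fstar ≤
          risk βp βm (fun z => Real.exp (-z)) P f) ∧
      (∀ f : Fin c → ℝ,
        (∀ g : Fin c → ℝ,
            risk βp βm (fun z => Real.exp (-z)) P f ≤
              risk βp βm (fun z => Real.exp (-z)) P g) →
          f = fstar) := by
  have hpt := fun (j : Fin c) (t : ℝ) =>
    pt (phiP βp P j) (phiM βm P j) (fstar j) t (hφp j) (hφm j) (hfstar j)
  constructor
  · intro f
    rw [risk_eq, risk_eq]
    exact Finset.sum_le_sum fun j _ => (hpt j (f j)).1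
  · intro f hmin
    have h1 : risk βp βm (fun z => Real.exp (-z)) P f
        ≤ risk βp βm (fun z => Real.exp (-z)) P fstar := hmin fstar
    rw [risk_eq, risk_eq] at h1
    have h2 : ∀ j ∈ Finset.univ,
        phiP βp P j * Real.exp (-(fstar j)) + phiM βm P j * Real.exp (fstar j)
          ≤ phiP βp P j * Real.exp (-(f j)) + phiM βm P j * Real.exp (f j) :=
      fun j _ => (hpt j (f j)).1
    have h3 := Finset.sum_le_sum h2
    have heq : ∀ j ∈ Finset.univ,
        phiP βp P j * Real.exp (-(fstar j)) + phiM βm P j * Real.exp (fstar j)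
          = phiP βp P j * Real.exp (-(f j)) + phiM βm P j * Real.exp (f j) :=
      (Finset.sum_eq_sum_iff_of_le h2).mp (le_antisymm h3 h1)
    funext j
    exact (hpt j (f j)).2 (heq j (Finset.mem_univ j))
end

section
/- Let c ≥ 1, let β⁺, β⁻: {−1,+1}^c → (0,∞) be positive penalty functions, and let P be a probability distribution on {−1,+1}^c such that φ_j^+(P) > 0 and φ_j^-(P) > 0 for every j ∈ {1,…,c}. Then the conditional surrogate risk f ↦ Σ_{y∈{−1,+1}^c} P(y)·L_u(f,y), with base loss ℓ(z) = ln(1 + e^{−z}), has a unique global minimizer f* over ℝ^c, given coordinatewise by f*_j = ln(φ_j^+(P)/φ_j^-(P)). -/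
open scoped BigOperators

/-- The univariate coordinate objective. -/
noncomputable def Hfun (a b t : ℝ) : ℝ :=
  a * Real.log (1 + Real.exp (-t)) + b * Real.log (1 + Real.exp t)

lemma Hform (a b t : ℝ) : Hfun a b t = (a+b) * Real.log (1 + Real.exp t) - a*t := by
  have h1 : (1 : ℝ) + Real.exp (-t) = (1 + Real.exp t) * Real.exp (-t) := by
    rw [add_mul, ← Real.exp_add]; simp; ring
  have hpos : (0:ℝ) < 1 + Real.exp t := by positivity
  rw [Hfun, h1, Real.log_mul (ne_of_gt hpos) (Real.exp_ne_zero _), Real.log_exp]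
  ring

lemma key (a b : ℝ) (ha : 0 < a) (hb : 0 < b) (t : ℝ) (ht : t ≠ Real.log (a/b)) :
    Hfun a b (Real.log (a/b)) < Hfun a b t := by
  set ts := Real.log (a/b) with hts
  have hab : (0:ℝ) < a + b := by linarith
  have hets : Real.exp ts = a / b := Real.exp_log (div_pos ha hb)
  set s := t - ts with hsdef
  have hs : s ≠ 0 := sub_ne_zero.mpr ht
  have hconv := strictConvexOn_exp.2 (Set.mem_univ (0:ℝ)) (Set.mem_univ s)
      (Ne.symm hs) (div_pos hb hab) (div_pos ha hab) (by field_simp; ring)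
  simp only [smul_eq_mul, mul_zero, zero_add, Real.exp_zero, mul_one] at hconv
  have hrhs : b/(a+b) + a/(a+b) * Real.exp s = (b + a * Real.exp s)/(a+b) := by ring
  rw [hrhs] at hconv
  have hbae : (0:ℝ) < b + a * Real.exp s := by positivity
  have hlog : a/(a+b) * s < Real.log ((b + a*Real.exp s)/(a+b)) := by
    calc a/(a+b) * s = Real.log (Real.exp (a/(a+b)*s)) := (Real.log_exp _).symm
    _ < _ := Real.log_lt_log (Real.exp_pos _) hconv
  rw [Real.log_div (ne_of_gt hbae) (ne_of_gt hab)] at hlog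
  have hkey : a * s < (a+b) * (Real.log (b + a*Real.exp s) - Real.log (a+b)) := by
    have := (mul_lt_mul_iff_right₀ hab).mpr hlog
    calc a * s = (a+b) * (a/(a+b) * s) := by field_simp
    _ < _ := this
  rw [Hform, Hform]
  have het : Real.exp t = (a/b) * Real.exp s := by
    rw [hsdef, ← hets, ← Real.exp_add]; ring_nf
  have h1 : (1:ℝ) + Real.exp t = (b + a * Real.exp s)/b := by
    rw [het]; field_simp
  have h2 : (1:ℝ) + Real.exp ts = (a+b)/b := by rw [hets]; field_simp; ring
  rw [h1, h2, Real.log_div (ne_of_gt hbae) (ne_of_gt hb),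
      Real.log_div (ne_of_gt hab) (ne_of_gt hb)]
  have hteq : t = ts + s := by rw [hsdef]; ring
  nlinarith [hkey]

lemma risk_decomp {c : ℕ} (βp βm : (Fin c → Bool) → ℝ) (ℓ : ℝ → ℝ)
    (P : (Fin c → Bool) → ℝ) (f : Fin c → ℝ) :
    risk βp βm ℓ P f = ∑ j, (phiP βp P j * ℓ (f j) + phiM βm P j * ℓ (-(f j))) := by
  unfold risk Lu
  simp_rw [Finset.mul_sum]
  rw [Finset.sum_comm]
  apply Finset.sum_congr rfl
  intro j _
  rw [phiP, phiM, Finset.sum_mul, Finset.sum_mul, ← Finset.sum_filter_add_sum_filter_not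
      (Finset.univ) (fun y : Fin c → Bool => y j = true)
      (fun y => P y * ((if y j then βp y else βm y) * ℓ (toSign (y j) * f j)))]
  congr 1
  · apply Finset.sum_congr rfl
    intro y hy
    simp only [Finset.mem_filter] at hy
    simp [hy.2, toSign]; ring
  · apply Finset.sum_congr
    · ext y; simp
    · intro y hy
      simp only [Finset.mem_filter] at hy
      simp [hy.2, toSign]; ring

lemma risk_eq_H {c : ℕ} (βp βm : (Fin c → Bool) → ℝ)
    (P : (Fin c → Bool) → ℝ) (f : Fin c → ℝ) :
    risk βp βm (fun z => Real.log (1 + Real.exp (-z))) P f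
      = ∑ j, Hfun (phiP βp P j) (phiM βm P j) (f j) := by
  rw [risk_decomp]
  apply Finset.sum_congr rfl
  intro j _
  simp [Hfun]

theorem stmt10 (c : ℕ) (hc : 1 ≤ c)
    (βp βm : (Fin c → Bool) → ℝ) (hβp : ∀ y, 0 < βp y) (hβm : ∀ y, 0 < βm y)
    (P : (Fin c → Bool) → ℝ) (hP : ∀ y, 0 ≤ P y) (hP1 : (∑ y, P y) = 1)
    (hφp : ∀ j, 0 < phiP βp P j) (hφm : ∀ j, 0 < phiM βm P j)
    (fstar : Fin c → ℝ)
    (hfstar : ∀ j, fstar j = Real.log (phiP βp P j / phiM βm P j)) :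
    (∀ f : Fin c → ℝ,
        risk βp βm (fun z => Real.log (1 + Real.exp (-z))) P fstar ≤
          risk βp βm (fun z => Real.log (1 + Real.exp (-z))) P f) ∧
      (∀ f : Fin c → ℝ,
        (∀ g : Fin c → ℝ,
            risk βp βm (fun z => Real.log (1 + Real.exp (-z))) P f ≤
              risk βp βm (fun z => Real.log (1 + Real.exp (-z))) P g) →
          f = fstar) := by
  have hcoord : ∀ (f : Fin c → ℝ) (j : Fin c),
      Hfun (phiP βp P j) (phiM βm P j) (fstar j) ≤ Hfun (phiP βp P j) (phiM βm P j) (f j) := by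
    intro f j
    by_cases h : f j = fstar j
    · rw [h]
    · rw [hfstar j]
      exact le_of_lt (key _ _ (hφp j) (hφm j) (f j) (by rw [← hfstar j]; exact h))
  constructor
  · intro f
    rw [risk_eq_H, risk_eq_H]
    exact Finset.sum_le_sum (fun j _ => hcoord f j)
  · intro f hmin
    funext j
    by_contra h
    have hlt : risk βp βm (fun z => Real.log (1 + Real.exp (-z))) P fstar <
        risk βp βm (fun z => Real.log (1 + Real.exp (-z))) P f := by
      rw [risk_eq_H, risk_eq_H]
      apply Finset.sum_lt_sum (fun i _ => hcoord f i)
      refine ⟨j, Finset.mem_univ j, ?_⟩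
      rw [hfstar j]
      exact key _ _ (hφp j) (hφm j) (f j) (by rw [← hfstar j]; exact h)
    exact absurd (hmin fstar) (not_le.mpr hlt)
end

section
/- For every c ≥ 2, every nontrivial y ∈ {−1,+1}^c and every s ∈ {−1,+1}^c: (1/(|S_y^+|·|S_y^-|)) Σ_{p∈S_y^+} Σ_{q∈S_y^-} 1[s_p ≤ s_q] ≤ (1/min{|S_y^+|,|S_y^-|}) Σ_{j=1}^c 1[s_j ≠ y_j]. -/
open scoped Classical BigOperators

theorem stmt19 (c : ℕ) (hc : 2 ≤ c)
    (y : Fin c → ℝ) (hy : ∀ j, y j = 1 ∨ y j = -1)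
    (hyp : (Sp y).Nonempty) (hym : (Sm y).Nonempty)
    (s : Fin c → ℝ) (hs : ∀ j, s j = 1 ∨ s j = -1) :
    (1 / (((Sp y).card : ℝ) * ((Sm y).card : ℝ))) *
        ∑ p ∈ Sp y, ∑ q ∈ Sm y, (if s p ≤ s q then (1 : ℝ) else 0) ≤
      (1 / ((min (Sp y).card (Sm y).card : ℕ) : ℝ)) *
        ∑ j, (if s j ≠ y j then (1 : ℝ) else 0) := by
  classical
  set A := Sp y with hA
  set B := Sm y with hB
  have hAy : ∀ p ∈ A, y p = 1 := by
    intro p hp; simpa [hA, Sp] using hp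
  have hBy : ∀ q ∈ B, y q = -1 := by
    intro q hq; simpa [hB, Sm] using hq
  -- counts
  set a1 := (A.filter (fun j => s j = 1)).card with ha1
  set a2 := (A.filter (fun j => s j = -1)).card with ha2
  set b1 := (B.filter (fun j => s j = 1)).card with hb1
  set b2 := (B.filter (fun j => s j = -1)).card with hb2
  have hsplitA : a1 + a2 = A.card := by
    rw [ha1, ha2]
    have : A.filter (fun j => s j = -1) = A.filter (fun j => ¬ s j = 1) := by
      apply Finset.filter_congr
      intro j hj
      rcases hs j with h | h <;> norm_num [h]
    rw [this]
    exact Finset.card_filter_add_card_filter_not _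
  have hsplitB : b1 + b2 = B.card := by
    rw [hb1, hb2]
    have : B.filter (fun j => s j = -1) = B.filter (fun j => ¬ s j = 1) := by
      apply Finset.filter_congr
      intro j hj
      rcases hs j with h | h <;> norm_num [h]
    rw [this]
    exact Finset.card_filter_add_card_filter_not _
  -- compute the double sum
  have hdouble : ∑ p ∈ A, ∑ q ∈ B, (if s p ≤ s q then (1 : ℝ) else 0)
      = (A.card : ℝ) * B.card - (a1 : ℝ) * b2 := by
    have h1 : ∀ p ∈ A, ∀ q ∈ B,
        (if s p ≤ s q then (1 : ℝ) else 0)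
          = 1 - (if s p = 1 then (1 : ℝ) else 0) * (if s q = -1 then (1 : ℝ) else 0) := by
      intro p hp q hq
      rcases hs p with h | h <;> rcases hs q with h' | h' <;>
        norm_num [h, h']
    calc ∑ p ∈ A, ∑ q ∈ B, (if s p ≤ s q then (1 : ℝ) else 0)
        = ∑ p ∈ A, ∑ q ∈ B, (1 - (if s p = 1 then (1 : ℝ) else 0) * (if s q = -1 then (1 : ℝ) else 0)) := by
          refine Finset.sum_congr rfl fun p hp => Finset.sum_congr rfl fun q hq => h1 p hp q hq
      _ = (A.card : ℝ) * B.card - (a1 : ℝ) * b2 := by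
          simp only [Finset.sum_sub_distrib, Finset.sum_const, nsmul_eq_mul, mul_one]
          rw [show (∑ p ∈ A, ∑ q ∈ B, (if s p = 1 then (1:ℝ) else 0) * (if s q = -1 then (1:ℝ) else 0))
              = (∑ p ∈ A, (if s p = 1 then (1:ℝ) else 0)) * (∑ q ∈ B, (if s q = -1 then (1:ℝ) else 0)) by
            rw [Finset.sum_mul]
            exact Finset.sum_congr rfl fun p _ => (Finset.mul_sum _ _ _).symm]
          rw [Finset.sum_boole, Finset.sum_boole]
  -- compute the error sum
  have herr : ∑ j, (if s j ≠ y j then (1 : ℝ) else 0) = (a2 : ℝ) + b1 := by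
    have hsplit : (Finset.univ : Finset (Fin c)) = A ∪ B := by
      ext j
      rcases hy j with h | h <;> norm_num [hA, hB, Sp, Sm, h]
    have hdisj : Disjoint A B := by
      rw [Finset.disjoint_left]
      intro j hjA hjB
      have := hAy j hjA
      have := hBy j hjB
      linarith
    rw [hsplit, Finset.sum_union hdisj]
    have h1 : ∑ j ∈ A, (if s j ≠ y j then (1 : ℝ) else 0)
        = ∑ j ∈ A, (if s j = -1 then (1 : ℝ) else 0) := by
      refine Finset.sum_congr rfl fun j hj => ?_
      have hyj := hAy j hj
      rcases hs j with h | h <;> norm_num [h, hyj]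
    have h2 : ∑ j ∈ B, (if s j ≠ y j then (1 : ℝ) else 0)
        = ∑ j ∈ B, (if s j = 1 then (1 : ℝ) else 0) := by
      refine Finset.sum_congr rfl fun j hj => ?_
      have hyj := hBy j hj
      rcases hs j with h | h <;> norm_num [h, hyj]
    rw [h1, h2, Finset.sum_boole, Finset.sum_boole]
  rw [hdouble, herr]
  -- now a pure arithmetic inequality
  have hM : (1 : ℝ) ≤ A.card := by exact_mod_cast hyp.card_pos
  have hN : (1 : ℝ) ≤ B.card := by exact_mod_cast hym.card_pos
  have hKM : ((min A.card B.card : ℕ) : ℝ) ≤ A.card := by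
    exact_mod_cast Nat.min_le_left _ _
  have hKN : ((min A.card B.card : ℕ) : ℝ) ≤ B.card := by
    exact_mod_cast Nat.min_le_right _ _
  have hK : (1 : ℝ) ≤ (min A.card B.card : ℕ) := by
    have : 1 ≤ min A.card B.card := le_min hyp.card_pos hym.card_pos
    exact_mod_cast this
  have hsA : (a1 : ℝ) + a2 = A.card := by exact_mod_cast hsplitA
  have hsB : (b1 : ℝ) + b2 = B.card := by exact_mod_cast hsplitB
  have ha1n : (0 : ℝ) ≤ a1 := Nat.cast_nonneg _
  have ha2n : (0 : ℝ) ≤ a2 := Nat.cast_nonneg _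
  have hb1n : (0 : ℝ) ≤ b1 := Nat.cast_nonneg _
  have hb2n : (0 : ℝ) ≤ b2 := Nat.cast_nonneg _
  set M := (A.card : ℝ)
  set N := (B.card : ℝ)
  set K := ((min A.card B.card : ℕ) : ℝ)
  have hab : (a1 : ℝ) * b2 = (M - a2) * (N - b1) := by
    rw [← hsA, ← hsB]; ring
  rw [div_mul_eq_mul_div, div_mul_eq_mul_div, div_le_div_iff₀ (by nlinarith) (by linarith)]
  nlinarith [hab, mul_nonneg (mul_nonneg (sub_nonneg.2 hKM) ha2n) (by linarith : (0:ℝ) ≤ N),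
    mul_nonneg (mul_nonneg (sub_nonneg.2 hKN) hb1n) (by linarith : (0:ℝ) ≤ M),
    mul_nonneg (mul_nonneg (by linarith : (0:ℝ) ≤ K) ha2n) hb1n,
    mul_nonneg ha1n hb2n]
end
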